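/- For homogeneous material (H ≡ 1), the bi-phase FEA convolution V = Θ ⊗ (U, H) reduces to the single-phase FEA convolution V = W ⊛ U, where the 3×3 kernel W is assembled from the phase-1 element matrices Θ¹ via the kernel assembly formula of Eq. 8. -/

import Mathlib

open Matrix

/-- For homogeneous material (`H ≡ 1`), the bi-phase FEA convolution
(Eq. 13) reduces to the single-phase FEA convolution `V = W ⊛ U`, where the
3×3 kernel `W` is assembled from the surviving phase's element matrix `Θ⁰`
via the kernel assembly formula of Eq. 8. -/
theorem biphase_reduces_to_singlephase
    (Θ : Fin 2 → Matrix (Fin 4) (Fin 4) ℝ)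
    (U V H : ℤ → ℤ → ℝ)
    (hH : ∀ i j : ℤ, H i j = 1)
    (hV : ∀ i j : ℤ,
      V i j =
        ∑ h : Fin 2,
          ((Θ h 0 2 * U (i + 1) (j - 1) + Θ h 1 2 * U (i + 1) j +
              Θ h 2 2 * U i j + Θ h 3 2 * U i (j - 1)) *
            ((h : ℝ) + (-1 : ℝ) ^ (h : ℕ) * H i (j - 1)) +
          (Θ h 0 3 * U (i + 1) j + Θ h 1 3 * U (i + 1) (j + 1) +
              Θ h 2 3 * U i (j + 1) + Θ h 3 3 * U i j) *
            ((h : ℝ) + (-1 : ℝ) ^ (h : ℕ) * H i j) +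
          (Θ h 0 0 * U i j + Θ h 1 0 * U i (j + 1) +
              Θ h 2 0 * U (i - 1) (j + 1) + Θ h 3 0 * U (i - 1) j) *
            ((h : ℝ) + (-1 : ℝ) ^ (h : ℕ) * H (i - 1) j) +
          (Θ h 0 1 * U i (j - 1) + Θ h 1 1 * U i j +
              Θ h 2 1 * U (i - 1) j + Θ h 3 1 * U (i - 1) (j - 1)) *
            ((h : ℝ) + (-1 : ℝ) ^ (h : ℕ) * H (i - 1) (j - 1)))) :
    ∀ i j : ℤ,
      V i j =
        ∑ a : Fin 3, ∑ b : Fin 3,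
          (!![Θ 0 3 1, Θ 0 2 1 + Θ 0 3 0, Θ 0 2 0;
              Θ 0 3 2 + Θ 0 0 1, Θ 0 0 0 + Θ 0 1 1 + Θ 0 2 2 + Θ 0 3 3,
                Θ 0 2 3 + Θ 0 1 0;
              Θ 0 0 2, Θ 0 1 2 + Θ 0 0 3, Θ 0 1 3] : Matrix (Fin 3) (Fin 3) ℝ)
              a b *
            U (i + (a : ℤ) - 1) (j + (b : ℤ) - 1) := by
  intro i j
  rw [hV i j]
  simp only [hH, Fin.sum_univ_succ, Fin.sum_univ_zero, Fin.sum_univ_three]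
  norm_num [Matrix.of_apply, Matrix.cons_val', Matrix.cons_val_zero,
    Matrix.cons_val_one, Matrix.head_cons, Matrix.head_fin_const,
    Fin.val_zero, Fin.val_one, Matrix.cons_val_two, Matrix.tail_cons]
  ring_nf
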